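/- If every collection of K balls of rank radius ρ in GF(q^m)^n has union of volume at most B, and a code C with t uncovered vectors (t ≤ K) exists, then some vector y covers at least ⌈t·v(ρ)/B⌉ vectors uncovered by C, yielding a code C ∪ {y} with at most t − ⌈t·v(ρ)/B⌉ uncovered vectors. -/
import Mathlib


/-- The rank weight of a vector `x ∈ GF(q^m)^n`: the dimension over `GF(q)` of the
`GF(q)`-span of the coordinates of `x`. -/
noncomputable def rankWeight (Fq : Type*) [Field Fq] {Fqm : Type*} [Field Fqm] [Algebra Fq Fqm]
    {n : ℕ} (x : Fin n → Fqm) : ℕ :=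
  Module.finrank Fq (Submodule.span Fq (Set.range x))

lemma rankWeight_sub_comm (Fq : Type*) [Field Fq] {Fqm : Type*} [Field Fqm] [Algebra Fq Fqm]
    {n : ℕ} (x y : Fin n → Fqm) : rankWeight Fq (x - y) = rankWeight Fq (y - x) := by
  have key : ∀ a b : Fin n → Fqm,
      Submodule.span Fq (Set.range (a - b)) ≤ Submodule.span Fq (Set.range (b - a)) := by
    intro a b
    rw [Submodule.span_le]
    rintro _ ⟨i, rfl⟩
    have h1 : (b - a) i ∈ Submodule.span Fq (Set.range (b - a)) :=
      Submodule.subset_span ⟨i, rfl⟩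
    have h2 := (Submodule.span Fq (Set.range (b - a))).neg_mem h1
    simpa [Pi.sub_apply, neg_sub] using h2
  unfold rankWeight
  rw [le_antisymm (key x y) (key y x)]

lemma rankWeight_zero (Fq : Type*) [Field Fq] {Fqm : Type*} [Field Fqm] [Algebra Fq Fqm]
    {n : ℕ} : rankWeight Fq (0 : Fin n → Fqm) = 0 := by
  unfold rankWeight
  have h : Submodule.span Fq (Set.range (0 : Fin n → Fqm)) = ⊥ := by
    rw [Submodule.span_eq_bot]
    rintro _ ⟨i, rfl⟩; rfl
  rw [h]
  exact finrank_bot Fq Fqm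

set_option maxHeartbeats 2000000 in
/-- If every collection of at most `K` balls of rank radius `ρ` has union of volume at most
`B`, and `C` leaves exactly `t ≤ K` vectors uncovered, then some vector `y` covers at least
`⌈t·v(ρ)/B⌉` uncovered vectors, so `C ∪ {y}` leaves at most `t - ⌈t·v(ρ)/B⌉` uncovered. -/
theorem stmt12 (q m n ρ K B t : ℕ) (Fq Fqm : Type*) [Field Fq] [Fintype Fq] [Field Fqm]
    [Fintype Fqm] [Algebra Fq Fqm] (hq : Fintype.card Fq = q)
    (hm : Module.finrank Fq Fqm = m) (hnm : n ≤ m) (hρ : ρ ≤ n)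
    (hB : ∀ S : Finset (Fin n → Fqm), S.card ≤ K →
      Nat.card {y : Fin n → Fqm | ∃ c ∈ S, rankWeight Fq (y - c) ≤ ρ} ≤ B)
    (C : Finset (Fin n → Fqm))
    (ht : Nat.card {x : Fin n → Fqm | ∀ c ∈ C, ρ < rankWeight Fq (x - c)} = t)
    (htK : t ≤ K) :
    ∃ y : Fin n → Fqm,
      (t * Nat.card {z : Fin n → Fqm // rankWeight Fq z ≤ ρ} + B - 1) / B ≤
        Nat.card {x : Fin n → Fqm |
          (∀ c ∈ C, ρ < rankWeight Fq (x - c)) ∧ rankWeight Fq (x - y) ≤ ρ} ∧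
      Nat.card {x : Fin n → Fqm |
          (∀ c ∈ C, ρ < rankWeight Fq (x - c)) ∧ ρ < rankWeight Fq (x - y)} ≤
        t - (t * Nat.card {z : Fin n → Fqm // rankWeight Fq z ≤ ρ} + B - 1) / B := by
  classical
  letI instP : DecidablePred (fun x : Fin n → Fqm => ∀ c ∈ C, ρ < rankWeight Fq (x - c)) :=
    fun _ => Classical.propDecidable _
  letI instEx : DecidablePred (fun y : Fin n → Fqm => ∃ c ∈
      Finset.univ.filter (fun x : Fin n → Fqm => ∀ c ∈ C, ρ < rankWeight Fq (x - c)),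
      rankWeight Fq (y - c) ≤ ρ) :=
    fun _ => Classical.propDecidable _
  have cardset : ∀ (Q : (Fin n → Fqm) → Prop) [DecidablePred Q],
      Nat.card {x | Q x} = (Finset.univ.filter Q).card := by
    intro Q _
    have h : {x | Q x} = ↑(Finset.univ.filter Q) := by ext x; simp
    rw [h, Nat.card_coe_set_eq, Set.ncard_coe_finset]
  have hUcard :
      (Finset.univ.filter (fun x : Fin n → Fqm => ∀ c ∈ C, ρ < rankWeight Fq (x - c))).card
        = t := by
    rw [← cardset]; exact ht
  have hVfilter : Nat.card {z : Fin n → Fqm // rankWeight Fq z ≤ ρ}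
      = (Finset.univ.filter (fun z : Fin n → Fqm => rankWeight Fq z ≤ ρ)).card := by
    rw [Nat.card_eq_fintype_card, Fintype.card_subtype]
  -- the two Nat.cards in the goal, per y, as filter cards
  have goal1 : ∀ y : Fin n → Fqm,
      Nat.card {x : Fin n → Fqm |
          (∀ c ∈ C, ρ < rankWeight Fq (x - c)) ∧ rankWeight Fq (x - y) ≤ ρ}
        = ((Finset.univ.filter (fun x : Fin n → Fqm => ∀ c ∈ C, ρ < rankWeight Fq (x - c))).filter
            (fun x => rankWeight Fq (x - y) ≤ ρ)).card := by
    intro y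
    rw [cardset, Finset.filter_filter]
  have goal2 : ∀ y : Fin n → Fqm,
      Nat.card {x : Fin n → Fqm |
          (∀ c ∈ C, ρ < rankWeight Fq (x - c)) ∧ ρ < rankWeight Fq (x - y)}
        = t - ((Finset.univ.filter
            (fun x : Fin n → Fqm => ∀ c ∈ C, ρ < rankWeight Fq (x - c))).filter
            (fun x => rankWeight Fq (x - y) ≤ ρ)).card := by
    intro y
    rw [cardset, ← Finset.filter_filter]
    have hpart := Finset.card_filter_add_card_filter_not
      (s := Finset.univ.filter (fun x : Fin n → Fqm => ∀ c ∈ C, ρ < rankWeight Fq (x - c)))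
      (p := fun x => rankWeight Fq (x - y) ≤ ρ)
    have h2 : (Finset.univ.filter
          (fun x : Fin n → Fqm => ∀ c ∈ C, ρ < rankWeight Fq (x - c))).filter
          (fun x => ρ < rankWeight Fq (x - y))
        = (Finset.univ.filter
          (fun x : Fin n → Fqm => ∀ c ∈ C, ρ < rankWeight Fq (x - c))).filter
          (fun x => ¬ rankWeight Fq (x - y) ≤ ρ) := by
      apply Finset.filter_congr
      intro x _
      simp [not_le]
    rw [h2]
    omega
  -- subset bound: second card ≤ t always
  have hsub : ∀ y : Fin n → Fqm,
      Nat.card {x : Fin n → Fqm |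
          (∀ c ∈ C, ρ < rankWeight Fq (x - c)) ∧ ρ < rankWeight Fq (x - y)} ≤ t := by
    intro y
    rw [goal2]; omega
  by_cases hdeg : t * Nat.card {z : Fin n → Fqm // rankWeight Fq z ≤ ρ} + B - 1 < B ∨ B = 0
  · -- degenerate case: the ceiling is 0
    have hzero : (t * Nat.card {z : Fin n → Fqm // rankWeight Fq z ≤ ρ} + B - 1) / B = 0 := by
      rcases hdeg with h | h
      · exact Nat.div_eq_of_lt h
      · simp [h]
    refine ⟨0, ?_, ?_⟩
    · rw [hzero]; exact Nat.zero_le _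
    · rw [hzero, Nat.sub_zero]; exact hsub 0
  push_neg at hdeg
  obtain ⟨hbig, hBne⟩ := hdeg
  have hBpos : 0 < B := Nat.pos_of_ne_zero hBne
  have htVpos : 0 < t * Nat.card {z : Fin n → Fqm // rankWeight Fq z ≤ ρ} := by omega
  have htpos : 0 < t := by
    rcases Nat.eq_zero_or_pos t with h | h
    · rw [h] at htVpos; simp at htVpos
    · exact h
  -- each ball has the same volume V
  have hball : ∀ x : Fin n → Fqm,
      (Finset.univ.filter (fun y => rankWeight Fq (x - y) ≤ ρ)).card
        = (Finset.univ.filter (fun z : Fin n → Fqm => rankWeight Fq z ≤ ρ)).card := by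
    intro x
    apply Finset.card_bij' (fun y _ => x - y) (fun z _ => x - z)
    · intro y hy
      simp only [Finset.mem_filter, Finset.mem_univ, true_and] at hy ⊢
      exact hy
    · intro z hz
      simp only [Finset.mem_filter, Finset.mem_univ, true_and] at hz ⊢
      simpa using hz
    · intro y _; simp
    · intro z _; simp
  -- the union of the balls centered at the uncovered vectors
  have hTB : (Finset.univ.filter (fun y : Fin n → Fqm => ∃ c ∈
      Finset.univ.filter (fun x : Fin n → Fqm => ∀ c ∈ C, ρ < rankWeight Fq (x - c)),
      rankWeight Fq (y - c) ≤ ρ)).card ≤ B := by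
    have h := hB (Finset.univ.filter
      (fun x : Fin n → Fqm => ∀ c ∈ C, ρ < rankWeight Fq (x - c)))
      (by rw [hUcard]; exact htK)
    rwa [cardset] at h
  -- double counting
  have hcount : t * Nat.card {z : Fin n → Fqm // rankWeight Fq z ≤ ρ}
      = ∑ y ∈ Finset.univ.filter (fun y : Fin n → Fqm => ∃ c ∈
          Finset.univ.filter (fun x : Fin n → Fqm => ∀ c ∈ C, ρ < rankWeight Fq (x - c)),
          rankWeight Fq (y - c) ≤ ρ),
        ((Finset.univ.filter
          (fun x : Fin n → Fqm => ∀ c ∈ C, ρ < rankWeight Fq (x - c))).filter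
          (fun x => rankWeight Fq (x - y) ≤ ρ)).card := by
    have e1 : t * Nat.card {z : Fin n → Fqm // rankWeight Fq z ≤ ρ}
        = ∑ x ∈ Finset.univ.filter
            (fun x : Fin n → Fqm => ∀ c ∈ C, ρ < rankWeight Fq (x - c)),
          (Finset.univ.filter (fun y => rankWeight Fq (x - y) ≤ ρ)).card := by
      rw [Finset.sum_congr rfl (fun x _ => (hball x).trans hVfilter.symm),
        Finset.sum_const, smul_eq_mul, hUcard]
    have e2 : ∑ x ∈ Finset.univ.filter
            (fun x : Fin n → Fqm => ∀ c ∈ C, ρ < rankWeight Fq (x - c)),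
          (Finset.univ.filter (fun y => rankWeight Fq (x - y) ≤ ρ)).card
        = ∑ y ∈ (Finset.univ : Finset (Fin n → Fqm)),
          ((Finset.univ.filter
            (fun x : Fin n → Fqm => ∀ c ∈ C, ρ < rankWeight Fq (x - c))).filter
            (fun x => rankWeight Fq (x - y) ≤ ρ)).card := by
      simp only [Finset.card_filter]
      exact Finset.sum_comm
    have e3 : ∑ y ∈ (Finset.univ : Finset (Fin n → Fqm)),
          ((Finset.univ.filter
            (fun x : Fin n → Fqm => ∀ c ∈ C, ρ < rankWeight Fq (x - c))).filter
            (fun x => rankWeight Fq (x - y) ≤ ρ)).card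
        = ∑ y ∈ Finset.univ.filter (fun y : Fin n → Fqm => ∃ c ∈
            Finset.univ.filter (fun x : Fin n → Fqm => ∀ c ∈ C, ρ < rankWeight Fq (x - c)),
            rankWeight Fq (y - c) ≤ ρ),
          ((Finset.univ.filter
            (fun x : Fin n → Fqm => ∀ c ∈ C, ρ < rankWeight Fq (x - c))).filter
            (fun x => rankWeight Fq (x - y) ≤ ρ)).card := by
      symm
      apply Finset.sum_subset (Finset.filter_subset _ _)
      intro y _ hyT
      rw [Finset.card_eq_zero, Finset.filter_eq_empty_iff]
      intro x hx hle
      apply hyT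
      simp only [Finset.mem_filter, Finset.mem_univ, true_and]
      exact ⟨x, (Finset.mem_filter.mp hx).2, by rwa [rankWeight_sub_comm]⟩
    rw [e1, e2, e3]
  -- the union is nonempty
  have hTne : (Finset.univ.filter (fun y : Fin n → Fqm => ∃ c ∈
      Finset.univ.filter (fun x : Fin n → Fqm => ∀ c ∈ C, ρ < rankWeight Fq (x - c)),
      rankWeight Fq (y - c) ≤ ρ)).Nonempty := by
    obtain ⟨x, hx⟩ := Finset.card_pos.mp (by omega : 0 < (Finset.univ.filter
      (fun x : Fin n → Fqm => ∀ c ∈ C, ρ < rankWeight Fq (x - c))).card)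
    refine ⟨x, ?_⟩
    simp only [Finset.mem_filter, Finset.mem_univ, true_and]
    exact ⟨x, (Finset.mem_filter.mp hx).2, by simp [sub_self, rankWeight_zero]⟩
  obtain ⟨y₀, hy₀T, hy₀max⟩ := Finset.exists_max_image _
    (fun y => ((Finset.univ.filter
      (fun x : Fin n → Fqm => ∀ c ∈ C, ρ < rankWeight Fq (x - c))).filter
      (fun x => rankWeight Fq (x - y) ≤ ρ)).card) hTne
  have hmain : t * Nat.card {z : Fin n → Fqm // rankWeight Fq z ≤ ρ}
      ≤ B * ((Finset.univ.filter
        (fun x : Fin n → Fqm => ∀ c ∈ C, ρ < rankWeight Fq (x - c))).filter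
        (fun x => rankWeight Fq (x - y₀) ≤ ρ)).card := by
    rw [hcount]
    calc _ ≤ (Finset.univ.filter (fun y : Fin n → Fqm => ∃ c ∈
            Finset.univ.filter (fun x : Fin n → Fqm => ∀ c ∈ C, ρ < rankWeight Fq (x - c)),
            rankWeight Fq (y - c) ≤ ρ)).card * ((Finset.univ.filter
          (fun x : Fin n → Fqm => ∀ c ∈ C, ρ < rankWeight Fq (x - c))).filter
          (fun x => rankWeight Fq (x - y₀) ≤ ρ)).card := by
          rw [← smul_eq_mul]
          exact Finset.sum_le_card_nsmul _ _ _ (fun y hy => hy₀max y hy)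
      _ ≤ _ := Nat.mul_le_mul_right _ hTB
  have hceil : (t * Nat.card {z : Fin n → Fqm // rankWeight Fq z ≤ ρ} + B - 1) / B
      ≤ ((Finset.univ.filter
        (fun x : Fin n → Fqm => ∀ c ∈ C, ρ < rankWeight Fq (x - c))).filter
        (fun x => rankWeight Fq (x - y₀) ≤ ρ)).card := by
    rw [Nat.div_le_iff_le_mul_add_pred hBpos]
    omega
  refine ⟨y₀, ?_, ?_⟩
  · rw [goal1]; exact hceil
  · rw [goal2]; exact Nat.sub_le_sub_left hceil t
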